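/- Let n ≥ 1, λ ∈ (0,1) and let K, L ⊆ ℝⁿ be nonempty bounded sets. Then G((1-λ)K + λL + (-1,1)ⁿ)^{1/n} ≥ (1-λ)·G(K)^{1/n} + λ·G(L)^{1/n}, where + denotes Minkowski addition. -/

import Mathlib

open scoped Pointwise

/-- The `L_p` sum of two sets (Lutwak–Yang–Zhang pointwise definition); for `p = 1`
it is the Minkowski sum. -/
noncomputable def pSum {E : Type*} [AddCommGroup E] [Module ℝ E] (p : ℝ) (K L : Set E) :
    Set E :=
  if p = 1 then K + L
  else {w | ∃ x ∈ K, ∃ y ∈ L, ∃ μ ∈ Set.Icc (0 : ℝ) 1,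
    w = ((1 - μ) ^ (1 - 1 / p) : ℝ) • x + ((μ : ℝ) ^ (1 - 1 / p) : ℝ) • y}

/-- The `L_p` scalar multiplication `t · K = t^{1/p} K`. -/
noncomputable def pSmul {E : Type*} [AddCommGroup E] [Module ℝ E] (p t : ℝ) (K : Set E) :
    Set E :=
  ((t : ℝ) ^ (1 / p : ℝ)) • K

/-- The set of integer points of `ℝⁿ`. -/
def intPts (n : ℕ) : Set (Fin n → ℝ) := {x | ∀ i, ∃ m : ℤ, x i = (m : ℝ)}

/-- The lattice point enumerator `G(M) = |M ∩ ℤⁿ|`. -/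
noncomputable def latG {n : ℕ} (M : Set (Fin n → ℝ)) : ℕ := (M ∩ intPts n).ncard

/-- The open cube `(a, b)ⁿ` in `ℝⁿ`. -/
def cube (n : ℕ) (a b : ℝ) : Set (Fin n → ℝ) := {x | ∀ i, x i ∈ Set.Ioo a b}

section BMaux

open MeasureTheory Set

variable {n : ℕ}

/-- half-open box -/
def bx (l u : Fin n → ℝ) : Set (Fin n → ℝ) := Set.univ.pi fun i => Set.Ico (l i) (u i)

lemma bx_measurable (l u : Fin n → ℝ) : MeasurableSet (bx l u) :=
  MeasurableSet.univ_pi fun _ => measurableSet_Ico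

lemma volume_bx (l u : Fin n → ℝ) :
    volume (bx l u) = ∏ i, ENNReal.ofReal (u i - l i) := by
  rw [bx, volume_pi_pi]
  simp [Real.volume_Ico]

lemma bx_nonempty {l u : Fin n → ℝ} (h : ∀ i, l i < u i) : (bx l u).Nonempty :=
  ⟨l, fun i _ => ⟨le_refl _, h i⟩⟩

lemma volume_bx_pos {l u : Fin n → ℝ} (h : ∀ i, l i < u i) : 0 < volume (bx l u) := by
  rw [volume_bx]
  rw [CanonicallyOrderedAdd.prod_pos]
  intro i _
  simpa using sub_pos.2 (h i)

lemma volume_bx_lt_top (l u : Fin n → ℝ) : volume (bx l u) < ⊤ := by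
  rw [volume_bx]
  exact ENNReal.prod_lt_top fun i _ => ENNReal.ofReal_lt_top

lemma bx_add_bx {l u l' u' : Fin n → ℝ} (h : ∀ i, l i < u i) (h' : ∀ i, l' i < u' i) :
    bx l u + bx l' u' = bx (l + l') (u + u') := by
  ext x
  constructor
  · rintro ⟨a, ha, b, hb, rfl⟩ i _
    have h1 := ha i (mem_univ i); have h2 := hb i (mem_univ i)
    exact ⟨by simpa [Pi.add_apply] using add_le_add h1.1 h2.1,
      by simpa [Pi.add_apply] using add_lt_add h1.2 h2.2⟩
  · intro hx
    have key : ∀ i, ∃ a b : ℝ, a ∈ Set.Ico (l i) (u i) ∧ b ∈ Set.Ico (l' i) (u' i) ∧ x i = a + b := by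
      intro i
      obtain ⟨h1, h2⟩ := hx i (mem_univ i)
      simp only [Pi.add_apply] at h1 h2
      by_cases hc : x i - l' i < u i
      · exact ⟨x i - l' i, l' i, ⟨by linarith, hc⟩, ⟨le_refl _, h' i⟩, by ring⟩
      · push_neg at hc
        set δ := min (u i - l i) (u' i + u i - x i) / 2 with hδ
        have hδ0 : 0 < δ := by
          have := h i
          apply div_pos _ (by norm_num)
          exact lt_min (by linarith) (by linarith)
        have hδ1 : δ < u i - l i := by
          have h5 : min (u i - l i) (u' i + u i - x i) ≤ u i - l i := min_le_left _ _
          have := h i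
          rw [hδ]; linarith
        have hδ2 : δ < u' i + u i - x i := by
          have h5 : min (u i - l i) (u' i + u i - x i) ≤ u' i + u i - x i := min_le_right _ _
          rw [hδ]; linarith
        exact ⟨u i - δ, x i - u i + δ, ⟨by linarith, by linarith⟩,
          ⟨by linarith [h' i], by linarith⟩, by ring⟩
    choose a b hab using key
    exact ⟨a, fun i _ => (hab i).1, b, fun i _ => (hab i).2.1, by
      funext i; exact ((hab i).2.2).symm⟩

lemma bx_inter_lt (l u : Fin n → ℝ) (i : Fin n) (t : ℝ) :
    bx l u ∩ {x | x i < t} = bx l (Function.update u i (min (u i) t)) := by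
  ext x
  simp only [mem_inter_iff, bx, mem_pi, mem_univ, forall_true_left, mem_setOf_eq]
  constructor
  · rintro ⟨hb, ht⟩ j
    rcases eq_or_ne j i with rfl | hj
    · exact ⟨(hb j).1, by simp [Function.update_self, lt_min_iff, (hb j).2, ht]⟩
    · simpa [Function.update_of_ne hj] using hb j
  · intro hb
    refine ⟨fun j => ?_, ?_⟩
    · rcases eq_or_ne j i with rfl | hj
      · have := hb j
        rw [Function.update_self] at this
        exact ⟨this.1, this.2.trans_le (min_le_left _ _)⟩
      · simpa [Function.update_of_ne hj] using hb j
    · have := hb i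
      rw [Function.update_self] at this
      exact this.2.trans_le (min_le_right _ _)

lemma bx_inter_ge (l u : Fin n → ℝ) (i : Fin n) (t : ℝ) :
    bx l u ∩ {x | ¬ x i < t} = bx (Function.update l i (max (l i) t)) u := by
  ext x
  simp only [mem_inter_iff, bx, mem_pi, mem_univ, forall_true_left, mem_setOf_eq, not_lt]
  constructor
  · rintro ⟨hb, ht⟩ j
    rcases eq_or_ne j i with rfl | hj
    · exact ⟨by simp [Function.update_self, max_le_iff, (hb j).1, ht], (hb j).2⟩
    · simpa [Function.update_of_ne hj] using hb j
  · intro hb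
    refine ⟨fun j => ?_, ?_⟩
    · rcases eq_or_ne j i with rfl | hj
      · have := hb j
        rw [Function.update_self] at this
        exact ⟨(le_max_left _ _).trans this.1, this.2⟩
      · simpa [Function.update_of_ne hj] using hb j
    · have := hb i
      rw [Function.update_self] at this
      exact (le_max_right _ _).trans this.1

open scoped Pointwise
open MeasureTheory Set

variable {n : ℕ}

abbrev BoxP (n : ℕ) := (Fin n → ℝ) × (Fin n → ℝ)

def good (p : BoxP n) : Prop := ∀ i, p.1 i < p.2 i

noncomputable instance : DecidablePred (good (n := n)) := fun _ => Fintype.decidableForallFintype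

def bxP (p : BoxP n) : Set (Fin n → ℝ) := bx p.1 p.2

lemma bxP_nonempty {p : BoxP n} (h : good p) : (bxP p).Nonempty := bx_nonempty h

lemma bxP_empty {p : BoxP n} (h : ¬ good p) : bxP p = ∅ := by
  rw [good] at h; push_neg at h
  obtain ⟨i, hi⟩ := h
  ext x
  simp only [bxP, bx, mem_pi, mem_univ, forall_true_left, mem_empty_iff_false, iff_false]
  intro hx
  exact absurd ((hx i).1.trans_lt (hx i).2) (not_lt.2 hi)

def famU (s : Finset (BoxP n)) : Set (Fin n → ℝ) := ⋃ p ∈ s, bxP p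

lemma famU_measurable (s : Finset (BoxP n)) : MeasurableSet (famU s) :=
  s.measurableSet_biUnion fun p _ => bx_measurable p.1 p.2

lemma famU_lt_top (s : Finset (BoxP n)) : volume (famU s) < ⊤ := by
  refine lt_of_le_of_lt (measure_biUnion_finset_le s _) (ENNReal.sum_lt_top.2 ?_)
  exact fun p _ => volume_bx_lt_top p.1 p.2

lemma famU_pos {s : Finset (BoxP n)} (hne : s.Nonempty) (hg : ∀ p ∈ s, good p) :
    0 < volume (famU s) := by
  obtain ⟨p, hp⟩ := hne
  calc 0 < volume (bxP p) := volume_bx_pos (hg p hp)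
    _ ≤ volume (famU s) := measure_mono (subset_biUnion_of_mem hp)

lemma famU_nonempty_of_pos {s : Finset (BoxP n)} (h : 0 < volume (famU s)) : s.Nonempty := by
  rcases s.eq_empty_or_nonempty with rfl | hne
  · simp [famU] at h
  · exact hne

/-- pairwise disjointness of the boxes of a family -/
def famDisj (s : Finset (BoxP n)) : Prop :=
  (s : Set (BoxP n)).Pairwise fun p q => Disjoint (bxP p) (bxP q)

def sumP (p q : BoxP n) : BoxP n := (p.1 + q.1, p.2 + q.2)

lemma famU_add_famU {s t : Finset (BoxP n)} (hs : ∀ p ∈ s, good p) (ht : ∀ p ∈ t, good p) :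
    famU s + famU t = famU ((s ×ˢ t).image fun pq => sumP pq.1 pq.2) := by
  ext x
  simp only [famU, Set.mem_add, mem_iUnion, Finset.mem_image, Finset.mem_product]
  constructor
  · rintro ⟨a, ⟨p, hp, hap⟩, b, ⟨q, hq, hbq⟩, rfl⟩
    refine ⟨sumP p q, ⟨⟨p, q⟩, ⟨⟨hp, hq⟩, rfl⟩⟩, ?_⟩
    rw [sumP, bxP, ← bx_add_bx (hs p hp) (ht q hq)]
    exact ⟨a, hap, b, hbq, rfl⟩
  · rintro ⟨r, ⟨⟨p, q⟩, ⟨⟨hp, hq⟩, rfl⟩⟩, hx⟩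
    rw [sumP, bxP, ← bx_add_bx (hs p hp) (ht q hq)] at hx
    obtain ⟨a, ha, b, hb, rfl⟩ := hx
    exact ⟨a, ⟨p, hp, ha⟩, b, ⟨q, hq, hb⟩, rfl⟩

lemma famU_add_measurable {s t : Finset (BoxP n)} (hs : ∀ p ∈ s, good p)
    (ht : ∀ p ∈ t, good p) : MeasurableSet (famU s + famU t) := by
  rw [famU_add_famU hs ht]; exact famU_measurable _

lemma famU_add_lt_top {s t : Finset (BoxP n)} (hs : ∀ p ∈ s, good p)
    (ht : ∀ p ∈ t, good p) : volume (famU s + famU t) < ⊤ := by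
  rw [famU_add_famU hs ht]; exact famU_lt_top _

/-- lower truncation of a family at hyperplane `x i = c` -/
noncomputable def truncL (i : Fin n) (c : ℝ) (p : BoxP n) : BoxP n :=
  (p.1, Function.update p.2 i (min (p.2 i) c))

noncomputable def truncU (i : Fin n) (c : ℝ) (p : BoxP n) : BoxP n :=
  (Function.update p.1 i (max (p.1 i) c), p.2)

lemma bxP_truncL (i : Fin n) (c : ℝ) (p : BoxP n) :
    bxP (truncL i c p) = bxP p ∩ {x | x i < c} := (bx_inter_lt p.1 p.2 i c).symm

lemma bxP_truncU (i : Fin n) (c : ℝ) (p : BoxP n) :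
    bxP (truncU i c p) = bxP p ∩ {x | ¬ x i < c} := (bx_inter_ge p.1 p.2 i c).symm

noncomputable def famL (s : Finset (BoxP n)) (i : Fin n) (c : ℝ) : Finset (BoxP n) :=
  (s.image (truncL i c)).filter good

noncomputable def famR (s : Finset (BoxP n)) (i : Fin n) (c : ℝ) : Finset (BoxP n) :=
  (s.image (truncU i c)).filter good

lemma famL_good {s : Finset (BoxP n)} {i c} : ∀ p ∈ famL s i c, good p := by
  intro p hp; exact (Finset.mem_filter.1 hp).2

lemma famR_good {s : Finset (BoxP n)} {i c} : ∀ p ∈ famR s i c, good p := by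
  intro p hp; exact (Finset.mem_filter.1 hp).2

lemma famU_famL (s : Finset (BoxP n)) (i : Fin n) (c : ℝ) :
    famU (famL s i c) = famU s ∩ {x | x i < c} := by
  ext x
  simp only [famU, mem_iUnion, famL, Finset.mem_filter, Finset.mem_image, mem_inter_iff,
    mem_setOf_eq]
  constructor
  · rintro ⟨p, ⟨⟨q, hq, rfl⟩, -⟩, hx⟩
    rw [bxP_truncL] at hx
    exact ⟨⟨q, hq, hx.1⟩, hx.2⟩
  · rintro ⟨⟨q, hq, hx⟩, hxc⟩
    refine ⟨truncL i c q, ⟨⟨q, hq, rfl⟩, ?_⟩, ?_⟩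
    · by_contra hbad
      have := bxP_empty hbad
      rw [bxP_truncL] at this
      exact absurd this (Set.nonempty_iff_ne_empty.1 ⟨x, hx, hxc⟩)
    · rw [bxP_truncL]; exact ⟨hx, hxc⟩

lemma famU_famR (s : Finset (BoxP n)) (i : Fin n) (c : ℝ) :
    famU (famR s i c) = famU s ∩ {x | ¬ x i < c} := by
  ext x
  simp only [famU, mem_iUnion, famR, Finset.mem_filter, Finset.mem_image, mem_inter_iff,
    mem_setOf_eq]
  constructor
  · rintro ⟨p, ⟨⟨q, hq, rfl⟩, -⟩, hx⟩
    rw [bxP_truncU] at hx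
    exact ⟨⟨q, hq, hx.1⟩, hx.2⟩
  · rintro ⟨⟨q, hq, hx⟩, hxc⟩
    refine ⟨truncU i c q, ⟨⟨q, hq, rfl⟩, ?_⟩, ?_⟩
    · by_contra hbad
      have := bxP_empty hbad
      rw [bxP_truncU] at this
      exact absurd this (Set.nonempty_iff_ne_empty.1 ⟨x, hx, hxc⟩)
    · rw [bxP_truncU]; exact ⟨hx, hxc⟩

lemma famL_disj {s : Finset (BoxP n)} (hd : famDisj s) (i : Fin n) (c : ℝ) :
    famDisj (famL s i c) := by
  intro p hp q hq hpq
  simp only [famL, Finset.coe_filter, Finset.mem_coe, Finset.mem_image, mem_setOf_eq] at hp hq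
  obtain ⟨⟨p', hp', rfl⟩, hgp⟩ := hp
  obtain ⟨⟨q', hq', rfl⟩, hgq⟩ := hq
  have hne : p' ≠ q' := fun h => hpq (by rw [h])
  have := hd hp' hq' hne
  rw [bxP_truncL, bxP_truncL]
  exact Disjoint.mono inter_subset_left inter_subset_left this

lemma famR_disj {s : Finset (BoxP n)} (hd : famDisj s) (i : Fin n) (c : ℝ) :
    famDisj (famR s i c) := by
  intro p hp q hq hpq
  simp only [famR, Finset.coe_filter, Finset.mem_coe, Finset.mem_image, mem_setOf_eq] at hp hq
  obtain ⟨⟨p', hp', rfl⟩, hgp⟩ := hp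
  obtain ⟨⟨q', hq', rfl⟩, hgq⟩ := hq
  have hne : p' ≠ q' := fun h => hpq (by rw [h])
  have := hd hp' hq' hne
  rw [bxP_truncU, bxP_truncU]
  exact Disjoint.mono inter_subset_left inter_subset_left this

lemma famL_card {s : Finset (BoxP n)} {i : Fin n} {c : ℝ} {p2 : BoxP n} (hp2 : p2 ∈ s)
    (h : ¬ good (truncL i c p2)) : (famL s i c).card ≤ s.card - 1 := by
  have hsub : famL s i c ⊆ (s.erase p2).image (truncL i c) := by
    intro q hq
    obtain ⟨⟨q', hq', rfl⟩, hgq⟩ := Finset.mem_filter.1 hq |>.imp (fun h => Finset.mem_image.1 h) id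
    rcases eq_or_ne q' p2 with rfl | hne
    · exact absurd hgq h
    · exact Finset.mem_image.2 ⟨q', Finset.mem_erase.2 ⟨hne, hq'⟩, rfl⟩
  calc (famL s i c).card ≤ ((s.erase p2).image (truncL i c)).card := Finset.card_le_card hsub
    _ ≤ (s.erase p2).card := Finset.card_image_le
    _ ≤ s.card - 1 := by rw [Finset.card_erase_of_mem hp2]

lemma famR_card {s : Finset (BoxP n)} {i : Fin n} {c : ℝ} {p1 : BoxP n} (hp1 : p1 ∈ s)
    (h : ¬ good (truncU i c p1)) : (famR s i c).card ≤ s.card - 1 := by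
  have hsub : famR s i c ⊆ (s.erase p1).image (truncU i c) := by
    intro q hq
    obtain ⟨⟨q', hq', rfl⟩, hgq⟩ := Finset.mem_filter.1 hq |>.imp (fun h => Finset.mem_image.1 h) id
    rcases eq_or_ne q' p1 with rfl | hne
    · exact absurd hgq h
    · exact Finset.mem_image.2 ⟨q', Finset.mem_erase.2 ⟨hne, hq'⟩, rfl⟩
  calc (famR s i c).card ≤ ((s.erase p1).image (truncU i c)).card := Finset.card_le_card hsub
    _ ≤ (s.erase p1).card := Finset.card_image_le
    _ ≤ s.card - 1 := by rw [Finset.card_erase_of_mem hp1]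

lemma vol_inter_lt_eq_sum {t : Finset (BoxP n)} (hd : famDisj t) (i : Fin n) (c : ℝ) :
    volume (famU t ∩ {x | x i < c}) = ∑ p ∈ t, volume (bxP (truncL i c p)) := by
  have : famU t ∩ {x | x i < c} = ⋃ p ∈ t, (bxP p ∩ {x | x i < c}) := by
    rw [famU, iUnion₂_inter]
  rw [this, measure_biUnion_finset]
  · simp_rw [bxP_truncL]
  · intro p hp q hq hpq
    exact Disjoint.mono inter_subset_left inter_subset_left (hd hp hq hpq)
  · intro p _
    exact (bx_measurable _ _).inter (measurableSet_lt (measurable_pi_apply i) measurable_const)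

lemma exists_cut {t : Finset (BoxP n)} (hne : t.Nonempty) (hg : ∀ p ∈ t, good p)
    (hd : famDisj t) (i : Fin n) {θ : ℝ} (h0 : 0 ≤ θ)
    (h1 : θ ≤ (volume (famU t)).toReal) :
    ∃ c, (volume (famU t ∩ {x | x i < c})).toReal = θ := by
  set f : ℝ → ℝ := fun c => (volume (famU t ∩ {x | x i < c})).toReal with hf
  have hformula : ∀ c, f c = ∑ p ∈ t, ∏ j, max (Function.update p.2 i (min (p.2 i) c) j - p.1 j) 0 := by
    intro c
    rw [hf]
    simp only [vol_inter_lt_eq_sum hd i c, bxP]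
    rw [ENNReal.toReal_sum (fun p _ => (volume_bx_lt_top (truncL i c p).1 (truncL i c p).2).ne)]
    refine Finset.sum_congr rfl fun p _ => ?_
    show (volume (bx (truncL i c p).1 (truncL i c p).2)).toReal = _
    rw [volume_bx, ENNReal.toReal_prod]
    exact Finset.prod_congr rfl fun j _ => ENNReal.toReal_ofReal'
  have hcont : Continuous f := by
    have : Continuous fun c : ℝ => ∑ p ∈ t, ∏ j, max (Function.update p.2 i (min (p.2 i) c) j - p.1 j) 0 := by
      refine continuous_finset_sum _ fun p _ => continuous_finset_prod _ fun j _ => ?_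
      rcases eq_or_ne j i with rfl | hj
      · simp only [Function.update_self]
        fun_prop
      · simp only [Function.update_of_ne hj]
        exact continuous_const
    convert this using 1
    funext c; exact hformula c
  obtain ⟨p0, hp0⟩ := hne
  set a := t.inf' ⟨p0, hp0⟩ (fun p => p.1 i) with ha
  set b := t.sup' ⟨p0, hp0⟩ (fun p => p.2 i) with hb
  have hab : a ≤ b := by
    calc a ≤ p0.1 i := Finset.inf'_le _ hp0
      _ ≤ p0.2 i := le_of_lt (hg p0 hp0 i)
      _ ≤ b := Finset.le_sup' (fun p : BoxP n => p.2 i) hp0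
  have hfa : f a = 0 := by
    have : famU t ∩ {x | x i < a} = ∅ := by
      ext x
      simp only [mem_inter_iff, famU, mem_iUnion, mem_setOf_eq, mem_empty_iff_false, iff_false,
        not_and]
      rintro ⟨p, hp, hx⟩
      have h1 : a ≤ p.1 i := Finset.inf'_le _ hp
      have h2 : p.1 i ≤ x i := (hx i (mem_univ i)).1
      exact not_lt.2 (h1.trans h2)
    simp [hf, this]
  have hfb : f b = (volume (famU t)).toReal := by
    have : famU t ∩ {x | x i < b} = famU t := by
      refine inter_eq_left.2 fun x hx => ?_
      obtain ⟨p, hp, hxp⟩ := mem_iUnion₂.1 hx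
      calc x i < p.2 i := (hxp i (mem_univ i)).2
        _ ≤ b := Finset.le_sup' (fun p : BoxP n => p.2 i) hp
    show (volume (famU t ∩ {x | x i < b})).toReal = _
    rw [this]
  have := intermediate_value_Icc hab hcont.continuousOn
  have hθ : θ ∈ Icc (f a) (f b) := by rw [hfa, hfb]; exact ⟨h0, h1⟩
  obtain ⟨c, _, hc⟩ := this hθ
  exact ⟨c, hc⟩

lemma amgm_boxes {n : ℕ} (hn : 1 ≤ n) {x y : Fin n → ℝ} (hx : ∀ i, 0 < x i)
    (hy : ∀ i, 0 < y i) :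
    (∏ i, x i) ^ (1 / (n : ℝ)) + (∏ i, y i) ^ (1 / (n : ℝ)) ≤
      (∏ i, (x i + y i)) ^ (1 / (n : ℝ)) := by
  have hn0 : (0 : ℝ) < n := by exact_mod_cast hn
  set S := ∏ i, (x i + y i) with hS
  have hSpos : 0 < S := Finset.prod_pos fun i _ => by linarith [hx i, hy i]
  have hxy : ∀ i, 0 < x i + y i := fun i => by linarith [hx i, hy i]
  have key : ∀ z : Fin n → ℝ, (∀ i, 0 ≤ z i) → (∀ i, z i ≤ x i + y i) →
      (∏ i, z i) ^ (1 / (n : ℝ)) ≤ S ^ (1 / (n : ℝ)) * ((n : ℝ)⁻¹ * ∑ i, z i / (x i + y i)) := by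
    intro z hz0 hz1
    have h1 : ∏ i, (z i / (x i + y i)) ^ ((n : ℝ)⁻¹) ≤ ∑ i, (n : ℝ)⁻¹ * (z i / (x i + y i)) := by
      refine Real.geom_mean_le_arith_mean_weighted Finset.univ _ _
        (fun i _ => by positivity) ?_ (fun i _ => div_nonneg (hz0 i) (hxy i).le)
      simp only [Finset.sum_const, Finset.card_univ, Fintype.card_fin, nsmul_eq_mul]
      field_simp
    have h2 : ∏ i, (z i / (x i + y i)) ^ ((n : ℝ)⁻¹) =
        (∏ i, z i) ^ ((n : ℝ)⁻¹) / S ^ ((n : ℝ)⁻¹) := by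
      have e1 : ∀ i ∈ Finset.univ, (z i / (x i + y i)) ^ ((n : ℝ)⁻¹) =
          z i ^ ((n : ℝ)⁻¹) / (x i + y i) ^ ((n : ℝ)⁻¹) := fun i _ =>
        Real.div_rpow (hz0 i) (hxy i).le _
      rw [Finset.prod_congr rfl e1, Finset.prod_div_distrib,
        Real.finset_prod_rpow _ _ (fun i _ => hz0 i),
        Real.finset_prod_rpow _ _ (fun i _ => (hxy i).le),
        ← Real.div_rpow (Finset.prod_nonneg fun i _ => hz0 i)
          (Finset.prod_nonneg fun i _ => (hxy i).le),
        Real.div_rpow (Finset.prod_nonneg fun i _ => hz0 i)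
          (Finset.prod_nonneg fun i _ => (hxy i).le)]
    rw [h2] at h1
    rw [div_le_iff₀ (Real.rpow_pos_of_pos hSpos _)] at h1
    calc (∏ i, z i) ^ (1 / (n : ℝ)) = (∏ i, z i) ^ ((n : ℝ)⁻¹) := by rw [one_div]
      _ ≤ (∑ i, (n : ℝ)⁻¹ * (z i / (x i + y i))) * S ^ ((n : ℝ)⁻¹) := h1
      _ = S ^ (1 / (n : ℝ)) * ((n : ℝ)⁻¹ * ∑ i, z i / (x i + y i)) := by
        rw [← Finset.mul_sum, one_div]; ring
  have hKx := key x (fun i => (hx i).le) (fun i => by linarith [hy i])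
  have hKy := key y (fun i => (hy i).le) (fun i => by linarith [hx i])
  have hsum : ((n : ℝ)⁻¹ * ∑ i, x i / (x i + y i)) + ((n : ℝ)⁻¹ * ∑ i, y i / (x i + y i)) = 1 := by
    rw [← mul_add, ← Finset.sum_add_distrib]
    have he : ∀ i ∈ Finset.univ, x i / (x i + y i) + y i / (x i + y i) = 1 := fun i _ => by
      rw [← add_div, div_self (hxy i).ne']
    rw [Finset.sum_congr rfl he]
    simp only [Finset.sum_const, Finset.card_univ, Fintype.card_fin, nsmul_eq_mul, mul_one]
    field_simp
  calc (∏ i, x i) ^ (1 / (n : ℝ)) + (∏ i, y i) ^ (1 / (n : ℝ))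
      ≤ S ^ (1 / (n : ℝ)) * (((n : ℝ)⁻¹ * ∑ i, x i / (x i + y i)) +
        ((n : ℝ)⁻¹ * ∑ i, y i / (x i + y i))) := by rw [mul_add]; exact add_le_add hKx hKy
    _ = S ^ (1 / (n : ℝ)) := by rw [hsum, mul_one]

lemma sep_coord {p q : BoxP n} (hp : good p) (hq : good q) (hd : Disjoint (bxP p) (bxP q)) :
    ∃ i, p.2 i ≤ q.1 i ∨ q.2 i ≤ p.1 i := by
  by_contra hcon
  push_neg at hcon
  set z : Fin n → ℝ := fun i => max (p.1 i) (q.1 i) with hz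
  have hzp : z ∈ bxP p := fun i _ =>
    ⟨le_max_left _ _, max_lt (hp i) (hcon i).1⟩
  have hzq : z ∈ bxP q := fun i _ =>
    ⟨le_max_right _ _, max_lt (hcon i).2 (hq i)⟩
  exact Set.disjoint_left.1 hd hzp hzq

lemma truncL_eq_self {p : BoxP n} {i : Fin n} {c : ℝ} (h : p.2 i ≤ c) : truncL i c p = p := by
  rw [truncL, min_eq_left h]
  exact Prod.ext rfl (Function.update_eq_self i p.2)

lemma truncU_eq_self {p : BoxP n} {i : Fin n} {c : ℝ} (h : c ≤ p.1 i) : truncU i c p = p := by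
  rw [truncU, max_eq_left h]
  exact Prod.ext (Function.update_eq_self i p.1) rfl

lemma not_good_truncL {p : BoxP n} {i : Fin n} {c : ℝ} (h : c ≤ p.1 i) :
    ¬ good (truncL i c p) := by
  intro hg
  have := hg i
  simp only [truncL, Function.update_self] at this
  exact absurd (this.trans_le (min_le_right _ _)) (not_lt.2 h)

lemma not_good_truncU {p : BoxP n} {i : Fin n} {c : ℝ} (h : p.2 i ≤ c) :
    ¬ good (truncU i c p) := by
  intro hg
  have := hg i
  simp only [truncU, Function.update_self] at this
  exact absurd ((le_max_right _ _).trans_lt this) (not_lt.2 h)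

lemma famL_card_le (s : Finset (BoxP n)) (i : Fin n) (c : ℝ) : (famL s i c).card ≤ s.card :=
  (Finset.card_filter_le _ _).trans Finset.card_image_le

lemma famR_card_le (s : Finset (BoxP n)) (i : Fin n) (c : ℝ) : (famR s i c).card ≤ s.card :=
  (Finset.card_filter_le _ _).trans Finset.card_image_le

/-- the Brunn–Minkowski statement for families of at most `N` boxes in total -/
def BMstmt (n N : ℕ) : Prop :=
  ∀ s t : Finset (BoxP n), s.card + t.card ≤ N →
    s.Nonempty → t.Nonempty → (∀ p ∈ s, good p) → (∀ p ∈ t, good p) →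
    famDisj s → famDisj t →
    (volume (famU s)).toReal ^ (1 / (n : ℝ)) + (volume (famU t)).toReal ^ (1 / (n : ℝ)) ≤
      (volume (famU s + famU t)).toReal ^ (1 / (n : ℝ))

lemma BM_step (hn : 1 ≤ n) {N : ℕ} (IH : ∀ M, M < N → BMstmt n M)
    (s t : Finset (BoxP n)) (hcard : s.card + t.card ≤ N)
    (htne : t.Nonempty) (hgs : ∀ p ∈ s, good p) (hgt : ∀ p ∈ t, good p)
    (hds : famDisj s) (hdt : famDisj t)
    (p1 p2 : BoxP n) (hp1 : p1 ∈ s) (hp2 : p2 ∈ s) {i : Fin n}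
    (hsep : p1.2 i ≤ p2.1 i) :
    (volume (famU s)).toReal ^ (1 / (n : ℝ)) + (volume (famU t)).toReal ^ (1 / (n : ℝ)) ≤
      (volume (famU s + famU t)).toReal ^ (1 / (n : ℝ)) := by
  have hne : (0 : ℝ) < n := by exact_mod_cast hn
  set e := (n : ℝ) with he
  set c := p2.1 i with hc
  set sL := famL s i c with hsL
  set sR := famR s i c with hsR
  -- basic facts about the split of s
  have hgsL := famL_good (s := s) (i := i) (c := c)
  have hgsR := famR_good (s := s) (i := i) (c := c)
  have hdsL := famL_disj hds i c
  have hdsR := famR_disj hds i c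
  have hUsL : famU sL = famU s ∩ {x | x i < c} := famU_famL s i c
  have hUsR : famU sR = famU s ∩ {x | ¬ x i < c} := famU_famR s i c
  have hcards : sL.card ≤ s.card - 1 := famL_card hp2 (not_good_truncL le_rfl)
  have hcardsR : sR.card ≤ s.card - 1 := famR_card hp1 (not_good_truncU hsep)
  -- positivity of the two halves
  have hp1sub : bxP p1 ⊆ famU sL := by
    rw [hUsL]
    intro x hx
    exact ⟨mem_biUnion hp1 hx, lt_of_lt_of_le (hx i (mem_univ i)).2 hsep⟩
  have hp2sub : bxP p2 ⊆ famU sR := by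
    rw [hUsR]
    intro x hx
    exact ⟨mem_biUnion hp2 hx, not_lt.2 (hx i (mem_univ i)).1⟩
  have hvolL : 0 < volume (famU sL) :=
    lt_of_lt_of_le (volume_bx_pos (hgs p1 hp1)) (measure_mono hp1sub)
  have hvolR : 0 < volume (famU sR) :=
    lt_of_lt_of_le (volume_bx_pos (hgs p2 hp2)) (measure_mono hp2sub)
  have hsLne : sL.Nonempty := famU_nonempty_of_pos (by simpa using hvolL)
  have hsRne : sR.Nonempty := famU_nonempty_of_pos (by simpa using hvolR)
  -- real volumes
  set vX := (volume (famU s)).toReal with hvX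
  set vXm := (volume (famU sL)).toReal with hvXm
  set vXp := (volume (famU sR)).toReal with hvXp
  set vY := (volume (famU t)).toReal with hvY
  have hsplitX : vXm + vXp = vX := by
    rw [hvXm, hvXp, hvX, ← ENNReal.toReal_add (ne_of_lt (lt_of_le_of_lt
      (measure_mono (by rw [hUsL]; exact inter_subset_left)) (famU_lt_top s)))
      (ne_of_lt (lt_of_le_of_lt (measure_mono (by rw [hUsR]; exact inter_subset_left))
      (famU_lt_top s)))]
    congr 1
    rw [hUsL, hUsR]
    have hmeas : MeasurableSet {x : Fin n → ℝ | x i < c} :=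
      measurableSet_lt (measurable_pi_apply i) measurable_const
    have := measure_inter_add_diff (μ := (volume : Measure (Fin n → ℝ))) (famU s) hmeas
    rw [diff_eq] at this
    have hcompl : ({x : Fin n → ℝ | x i < c})ᶜ = {x : Fin n → ℝ | ¬ x i < c} := rfl
    rw [hcompl] at this
    exact this
  have hvXmpos : 0 < vXm := ENNReal.toReal_pos hvolL.ne' (ne_of_lt (lt_of_le_of_lt
    (measure_mono (by rw [hUsL]; exact inter_subset_left)) (famU_lt_top s)))
  have hvXppos : 0 < vXp := ENNReal.toReal_pos hvolR.ne' (ne_of_lt (lt_of_le_of_lt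
    (measure_mono (by rw [hUsR]; exact inter_subset_left)) (famU_lt_top s)))
  have hvXpos : 0 < vX := by linarith
  have hvYpos : 0 < vY :=
    ENNReal.toReal_pos (famU_pos htne hgt).ne' (famU_lt_top t).ne
  set θ := vXm / vX with hθ
  have hθpos : 0 < θ := div_pos hvXmpos hvXpos
  have hθlt : θ < 1 := (div_lt_one hvXpos).2 (by linarith)
  -- cut t
  obtain ⟨c', hc'⟩ := exists_cut htne hgt hdt i (θ := θ * vY)
    (by positivity) (by nlinarith)
  set tL := famL t i c' with htL
  set tR := famR t i c' with htR
  have hgtL := famL_good (s := t) (i := i) (c := c')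
  have hgtR := famR_good (s := t) (i := i) (c := c')
  have hdtL := famL_disj hdt i c'
  have hdtR := famR_disj hdt i c'
  have hUtL : famU tL = famU t ∩ {x | x i < c'} := famU_famL t i c'
  have hUtR : famU tR = famU t ∩ {x | ¬ x i < c'} := famU_famR t i c'
  set vYm := (volume (famU tL)).toReal with hvYm
  set vYp := (volume (famU tR)).toReal with hvYp
  have hYmval : vYm = θ * vY := by rw [hvYm, hUtL]; exact hc'
  have hsplitY : vYm + vYp = vY := by
    rw [hvYm, hvYp, hvY, ← ENNReal.toReal_add (ne_of_lt (lt_of_le_of_lt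
      (measure_mono (by rw [hUtL]; exact inter_subset_left)) (famU_lt_top t)))
      (ne_of_lt (lt_of_le_of_lt (measure_mono (by rw [hUtR]; exact inter_subset_left))
      (famU_lt_top t)))]
    congr 1
    rw [hUtL, hUtR]
    have hmeas : MeasurableSet {x : Fin n → ℝ | x i < c'} :=
      measurableSet_lt (measurable_pi_apply i) measurable_const
    have := measure_inter_add_diff (μ := (volume : Measure (Fin n → ℝ))) (famU t) hmeas
    rw [diff_eq] at this
    have hcompl : ({x : Fin n → ℝ | x i < c'})ᶜ = {x : Fin n → ℝ | ¬ x i < c'} := rfl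
    rw [hcompl] at this
    exact this
  have hYpval : vYp = (1 - θ) * vY := by rw [sub_mul, one_mul, ← hYmval]; linarith
  have hvYmpos : 0 < vYm := by rw [hYmval]; positivity
  have hvYppos : 0 < vYp := by rw [hYpval]; nlinarith
  have htLne : tL.Nonempty := by
    have hvne : volume (famU tL) ≠ 0 := by
      intro h
      rw [hvYm, h] at hvYmpos
      simp at hvYmpos
    exact famU_nonempty_of_pos (pos_iff_ne_zero.2 hvne)
  have htRne : tR.Nonempty := by
    have hvne : volume (famU tR) ≠ 0 := by
      intro h
      rw [hvYp, h] at hvYppos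
      simp at hvYppos
    exact famU_nonempty_of_pos (pos_iff_ne_zero.2 hvne)
  -- apply IH to the two halves
  have hNpos : 1 ≤ N := le_trans (by have := Finset.card_pos.2 htne; omega) hcard
  have hcard2 : 2 ≤ s.card := Finset.one_lt_card.2 ⟨p1, hp1, p2, hp2, by
    intro h
    subst h
    exact absurd ((hgs p1 hp1) i) (not_lt.2 hsep)⟩
  have htLcard : tL.card ≤ t.card := famL_card_le t i c'
  have htRcard : tR.card ≤ t.card := famR_card_le t i c'
  have hIH1 := IH (N - 1) (by omega) sL tL (by omega) hsLne htLne hgsL hgtL hdsL hdtL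
  have hIH2 := IH (N - 1) (by omega) sR tR (by omega) hsRne htRne hgsR hgtR hdsR hdtR
  -- superadditivity of the volume of the sum
  set S1 := famU sL + famU tL with hS1
  set S2 := famU sR + famU tR with hS2
  have hS1sub : S1 ⊆ {x | x i < c + c'} := by
    rintro x ⟨a, ha, b, hb, rfl⟩
    rw [hUsL] at ha; rw [hUtL] at hb
    have h1 : a i < c := ha.2
    have h2 : b i < c' := hb.2
    show (a + b) i < c + c'
    exact add_lt_add h1 h2
  have hS2sub : S2 ⊆ {x | ¬ x i < c + c'} := by
    rintro x ⟨a, ha, b, hb, rfl⟩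
    rw [hUsR] at ha; rw [hUtR] at hb
    have h1 : ¬ a i < c := ha.2
    have h2 : ¬ b i < c' := hb.2
    show ¬ (a + b) i < c + c'
    exact not_lt.2 (add_le_add (not_lt.1 h1) (not_lt.1 h2))
  have hdisj : Disjoint S1 S2 := by
    rw [Set.disjoint_left]
    intro x h1 h2
    exact hS2sub h2 (hS1sub h1)
  have hsub : S1 ∪ S2 ⊆ famU s + famU t := by
    apply union_subset
    · exact Set.add_subset_add (by rw [hUsL]; exact inter_subset_left)
        (by rw [hUtL]; exact inter_subset_left)
    · exact Set.add_subset_add (by rw [hUsR]; exact inter_subset_left)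
        (by rw [hUtR]; exact inter_subset_left)
  have hsuper : volume S1 + volume S2 ≤ volume (famU s + famU t) := by
    rw [← measure_union hdisj (famU_add_measurable hgsR hgtR)]
    exact measure_mono hsub
  set r1 := (volume S1).toReal with hr1
  set r2 := (volume S2).toReal with hr2
  have hr1fin : volume S1 ≠ ⊤ := (famU_add_lt_top hgsL hgtL).ne
  have hr2fin : volume S2 ≠ ⊤ := (famU_add_lt_top hgsR hgtR).ne
  have hsuperR : r1 + r2 ≤ (volume (famU s + famU t)).toReal := by
    rw [hr1, hr2, ← ENNReal.toReal_add hr1fin hr2fin]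
    exact ENNReal.toReal_le_toReal (by simp [hr1fin, hr2fin, ENNReal.add_ne_top])
      (famU_add_lt_top hgs hgt).ne |>.2 hsuper
  -- the rpow algebra
  have hr1nn : 0 ≤ r1 := ENNReal.toReal_nonneg
  have hr2nn : 0 ≤ r2 := ENNReal.toReal_nonneg
  set sfin := vX ^ (1 / e) + vY ^ (1 / e) with hsfin
  have hsfinpos : 0 < sfin := by
    have := Real.rpow_pos_of_pos hvXpos (1 / e)
    have := Real.rpow_pos_of_pos hvYpos (1 / e)
    rw [hsfin]; linarith
  have hXmval : vXm = θ * vX := by rw [hθ, div_mul_cancel₀ _ hvXpos.ne']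
  have hXpval : vXp = (1 - θ) * vX := by rw [sub_mul, one_mul, ← hXmval]; linarith
  have key1 : θ * sfin ^ e ≤ r1 := by
    have hlhs : vXm ^ (1 / e) + vYm ^ (1 / e) = θ ^ (1 / e) * sfin := by
      rw [hXmval, hYmval, Real.mul_rpow hθpos.le hvXpos.le,
        Real.mul_rpow hθpos.le hvYpos.le, hsfin, mul_add]
    have hpow := Real.rpow_le_rpow (by positivity) hIH1 hne.le
    rw [hlhs] at hpow
    calc θ * sfin ^ e = (θ ^ (1 / e) * sfin) ^ e := by
          rw [Real.mul_rpow (Real.rpow_nonneg hθpos.le _) hsfinpos.le, ← Real.rpow_mul hθpos.le,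
            one_div, inv_mul_cancel₀ hne.ne', Real.rpow_one]
      _ ≤ (r1 ^ (1 / e)) ^ e := hpow
      _ = r1 := by
          rw [← Real.rpow_mul hr1nn, one_div, inv_mul_cancel₀ hne.ne', Real.rpow_one]
  have key2 : (1 - θ) * sfin ^ e ≤ r2 := by
    have hlhs : vXp ^ (1 / e) + vYp ^ (1 / e) = (1 - θ) ^ (1 / e) * sfin := by
      rw [hXpval, hYpval, Real.mul_rpow (by linarith) hvXpos.le,
        Real.mul_rpow (by linarith) hvYpos.le, hsfin, mul_add]
    have hpow := Real.rpow_le_rpow (by positivity) hIH2 hne.le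
    rw [hlhs] at hpow
    calc (1 - θ) * sfin ^ e = ((1 - θ) ^ (1 / e) * sfin) ^ e := by
          rw [Real.mul_rpow (Real.rpow_nonneg (by linarith) _) hsfinpos.le, ← Real.rpow_mul (by linarith : (0:ℝ) ≤ 1 - θ),
            one_div, inv_mul_cancel₀ hne.ne', Real.rpow_one]
      _ ≤ (r2 ^ (1 / e)) ^ e := hpow
      _ = r2 := by
          rw [← Real.rpow_mul hr2nn, one_div, inv_mul_cancel₀ hne.ne', Real.rpow_one]
  have hfinal : sfin ^ e ≤ (volume (famU s + famU t)).toReal := by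
    linarith
  calc vX ^ (1 / e) + vY ^ (1 / e) = sfin := hsfin.symm
    _ = (sfin ^ e) ^ (1 / e) := by
        rw [← Real.rpow_mul hsfinpos.le, mul_one_div, div_self hne.ne', Real.rpow_one]
    _ ≤ (volume (famU s + famU t)).toReal ^ (1 / e) :=
        Real.rpow_le_rpow (by positivity) hfinal (by positivity)

lemma vol_bxP_toReal {p : BoxP n} (hp : good p) :
    (volume (bxP p)).toReal = ∏ i, (p.2 i - p.1 i) := by
  show (volume (bx p.1 p.2)).toReal = _
  rw [volume_bx, ENNReal.toReal_prod]
  exact Finset.prod_congr rfl fun i _ => ENNReal.toReal_ofReal (by linarith [hp i])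

theorem BM_boxes {n : ℕ} (hn : 1 ≤ n) (N : ℕ) : BMstmt n N := by
  induction N using Nat.strong_induction_on with
  | _ N IH =>
    intro s t hcard hsne htne hgs hgt hds hdt
    by_cases hs2 : 2 ≤ s.card
    · obtain ⟨p1, hp1, p2, hp2, hne12⟩ := Finset.one_lt_card.1 hs2
      obtain ⟨i, hi | hi⟩ := sep_coord (hgs p1 hp1) (hgs p2 hp2)
        (hds (Finset.mem_coe.2 hp1) (Finset.mem_coe.2 hp2) hne12)
      · exact BM_step hn IH s t hcard htne hgs hgt hds hdt p1 p2 hp1 hp2 hi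
      · exact BM_step hn IH s t hcard htne hgs hgt hds hdt p2 p1 hp2 hp1 hi
    · by_cases ht2 : 2 ≤ t.card
      · obtain ⟨q1, hq1, q2, hq2, hne12⟩ := Finset.one_lt_card.1 ht2
        obtain ⟨i, hi | hi⟩ := sep_coord (hgt q1 hq1) (hgt q2 hq2)
          (hdt (Finset.mem_coe.2 hq1) (Finset.mem_coe.2 hq2) hne12)
        · have h := BM_step hn IH t s (by omega) hsne hgt hgs hdt hds q1 q2 hq1 hq2 hi
          rw [add_comm (famU t) (famU s)] at h
          linarith
        · have h := BM_step hn IH t s (by omega) hsne hgt hgs hdt hds q2 q1 hq2 hq1 hi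
          rw [add_comm (famU t) (famU s)] at h
          linarith
      · -- base case: single boxes
        have hs1 : s.card = 1 := by have := Finset.card_pos.2 hsne; omega
        have ht1 : t.card = 1 := by have := Finset.card_pos.2 htne; omega
        obtain ⟨p, rfl⟩ := Finset.card_eq_one.1 hs1
        obtain ⟨q, rfl⟩ := Finset.card_eq_one.1 ht1
        have hgp : good p := hgs p (Finset.mem_singleton_self p)
        have hgq : good q := hgt q (Finset.mem_singleton_self q)
        have hU1 : famU {p} = bxP p := by simp [famU]
        have hU2 : famU {q} = bxP q := by simp [famU]
        rw [hU1, hU2]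
        have hsum : bxP p + bxP q = bxP (sumP p q) := by
          show bx p.1 p.2 + bx q.1 q.2 = bx (p.1 + q.1) (p.2 + q.2)
          exact bx_add_bx hgp hgq
        rw [hsum]
        have hgpq : good (sumP p q) := fun i => by
          have := hgp i; have := hgq i
          show p.1 i + q.1 i < p.2 i + q.2 i
          linarith
        rw [vol_bxP_toReal hgp, vol_bxP_toReal hgq, vol_bxP_toReal hgpq]
        have : ∀ i ∈ Finset.univ, (sumP p q).2 i - (sumP p q).1 i =
            (p.2 i - p.1 i) + (q.2 i - q.1 i) := fun i _ => by
          show p.2 i + q.2 i - (p.1 i + q.1 i) = _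
          ring
        rw [Finset.prod_congr rfl this]
        exact amgm_boxes hn (fun i => by linarith [hgp i]) (fun i => by linarith [hgq i])

lemma finite_int_inter {M : Set (Fin n → ℝ)} (hb : Bornology.IsBounded M) :
    (M ∩ intPts n).Finite := by
  obtain ⟨R, hR⟩ := hb.subset_closedBall 0
  set f : (Fin n → ℝ) → (Fin n → ℤ) := fun x i => ⌊x i⌋ with hf
  have hinj : Set.InjOn f (M ∩ intPts n) := by
    intro x hx y hy hxy
    funext i
    obtain ⟨mx, hmx⟩ := hx.2 i
    obtain ⟨my, hmy⟩ := hy.2 i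
    have : (⌊x i⌋ : ℤ) = ⌊y i⌋ := congrFun hxy i
    rw [hmx, hmy, Int.floor_intCast, Int.floor_intCast] at this
    rw [hmx, hmy, this]
  have himg : f '' (M ∩ intPts n) ⊆ Set.univ.pi fun _ => Set.Icc (-⌈R⌉) ⌈R⌉ := by
    rintro z ⟨x, hx, rfl⟩
    intro i _
    have hxball := hR hx.1
    have hnorm : |x i| ≤ R := by
      have h1 : ‖x i‖ ≤ ‖x‖ := norm_le_pi_norm x i
      have h2 : ‖x‖ ≤ R := by simpa [Metric.mem_closedBall, dist_zero_right] using hxball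
      simpa [Real.norm_eq_abs] using h1.trans h2
    obtain ⟨m, hm⟩ := hx.2 i
    have hz : f x i = m := by simp [hf, hm]
    rw [hz]
    rw [hm] at hnorm
    constructor
    · have : -(R : ℝ) ≤ m := by cases abs_le.1 hnorm; linarith
      have : -(⌈R⌉ : ℝ) ≤ (m : ℝ) := le_trans (by exact_mod_cast neg_le_neg (Int.le_ceil R)) this
      exact_mod_cast this
    · have : (m : ℝ) ≤ R := (abs_le.1 hnorm).2
      have : (m : ℝ) ≤ (⌈R⌉ : ℝ) := this.trans (Int.le_ceil R)
      exact_mod_cast this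
  have hfin : (Set.univ.pi fun _ : Fin n => Set.Icc (-⌈R⌉) ⌈R⌉).Finite :=
    Set.Finite.pi fun _ => Set.finite_Icc _ _
  exact Set.Finite.of_finite_image (hfin.subset himg) hinj

lemma bx_disjoint_of_coord {l u l' u' : Fin n → ℝ} {i : Fin n}
    (h : u i ≤ l' i ∨ u' i ≤ l i) : Disjoint (bx l u) (bx l' u') := by
  rw [Set.disjoint_left]
  intro x hx hx'
  have h1 := hx i (mem_univ i)
  have h2 := hx' i (mem_univ i)
  rcases h with h | h
  · exact absurd ((h1.2.trans_le h).trans_le h2.1) (lt_irrefl _)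
  · exact absurd ((h2.2.trans_le h).trans_le h1.1) (lt_irrefl _)

noncomputable def cubeFam (μ : ℝ) (F : Finset (Fin n → ℝ)) : Finset (BoxP n) :=
  F.image fun a => (fun i => μ * a i, fun i => μ * (a i + 1))

lemma cubeFam_good {μ : ℝ} (hμ : 0 < μ) {F : Finset (Fin n → ℝ)} :
    ∀ p ∈ cubeFam μ F, good p := by
  rintro p hp
  obtain ⟨a, _, rfl⟩ := Finset.mem_image.1 hp
  intro i
  simp only
  nlinarith

lemma cubeFam_inj {μ : ℝ} (hμ : 0 < μ) :
    Function.Injective (fun a : Fin n → ℝ => ((fun i => μ * a i, fun i => μ * (a i + 1)) : BoxP n)) := by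
  intro a a' h
  have h1 := congrArg Prod.fst h
  funext i
  have := congrFun h1 i
  simp only at this
  exact mul_left_cancel₀ hμ.ne' this

lemma cubeFam_card {μ : ℝ} (hμ : 0 < μ) (F : Finset (Fin n → ℝ)) :
    (cubeFam μ F).card = F.card :=
  Finset.card_image_of_injective _ (cubeFam_inj hμ)

lemma cubeFam_disj {μ : ℝ} (hμ : 0 < μ) {F : Finset (Fin n → ℝ)}
    (hsep : ∀ a ∈ F, ∀ a' ∈ F, a ≠ a' → ∃ i, a i + 1 ≤ a' i ∨ a' i + 1 ≤ a i) :
    famDisj (cubeFam μ F) := by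
  intro p hp q hq hpq
  rw [Finset.mem_coe, cubeFam, Finset.mem_image] at hp hq
  obtain ⟨a, ha, rfl⟩ := hp
  obtain ⟨a', ha', rfl⟩ := hq
  have hne : a ≠ a' := fun h => hpq (by rw [h])
  obtain ⟨i, hi | hi⟩ := hsep a ha a' ha' hne
  · exact bx_disjoint_of_coord (i := i) (Or.inl (by simp only; nlinarith))
  · exact bx_disjoint_of_coord (i := i) (Or.inr (by simp only; nlinarith))

lemma cubeFam_vol {μ : ℝ} (hμ : 0 < μ) {F : Finset (Fin n → ℝ)}
    (hsep : ∀ a ∈ F, ∀ a' ∈ F, a ≠ a' → ∃ i, a i + 1 ≤ a' i ∨ a' i + 1 ≤ a i) :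
    (volume (famU (cubeFam μ F))).toReal = F.card * μ ^ n := by
  have hdisj := cubeFam_disj hμ hsep
  have hsum : volume (famU (cubeFam μ F)) = ∑ p ∈ cubeFam μ F, volume (bxP p) := by
    refine measure_biUnion_finset ?_ fun p _ => bx_measurable p.1 p.2
    exact hdisj
  rw [hsum, cubeFam, Finset.sum_image (fun a _ a' _ h => cubeFam_inj hμ h)]
  have hvol : ∀ a ∈ F, volume (bxP ((fun i => μ * a i, fun i => μ * (a i + 1)) : BoxP n)) =
      ENNReal.ofReal (μ ^ n) := by
    intro a _
    show volume (bx _ _) = _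
    rw [volume_bx]
    have : ∀ i ∈ Finset.univ, ENNReal.ofReal (μ * (a i + 1) - μ * a i) = ENNReal.ofReal μ :=
      fun i _ => by norm_num [mul_add]
    rw [Finset.prod_congr rfl this, Finset.prod_const, Finset.card_univ, Fintype.card_fin,
      ENNReal.ofReal_pow hμ.le]
  rw [Finset.sum_congr rfl hvol, Finset.sum_const, nsmul_eq_mul]
  rw [ENNReal.toReal_mul, ENNReal.toReal_ofReal (by positivity)]
  simp

lemma cubeFam_nonempty {μ : ℝ} {F : Finset (Fin n → ℝ)} (hF : F.Nonempty) :
    (cubeFam μ F).Nonempty := hF.image _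

lemma cube_bounded : Bornology.IsBounded (cube n (-1) 1) := by
  refine (Metric.isBounded_closedBall (x := (0 : Fin n → ℝ)) (r := 1)).subset ?_
  intro x hx
  simp only [Metric.mem_closedBall, dist_zero_right]
  refine (pi_norm_le_iff_of_nonneg (by norm_num)).2 fun i => ?_
  have := hx i
  rw [Real.norm_eq_abs, abs_le]
  constructor <;> [linarith [this.1]; linarith [this.2]]

lemma main_aux {n : ℕ} (hn : 1 ≤ n) {lam : ℝ} (hlam : lam ∈ Set.Ioo (0:ℝ) 1)
    {K L : Set (Fin n → ℝ)} (hKb : Bornology.IsBounded K) (hLb : Bornology.IsBounded L)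
    (A B : Finset (Fin n → ℝ)) (hAne : A.Nonempty) (hBne : B.Nonempty)
    (hAK : ∀ a ∈ A, a ∈ K) (hBL : ∀ b ∈ B, b ∈ L)
    (hsepA : ∀ a ∈ A, ∀ a' ∈ A, a ≠ a' → ∃ i, a i + 1 ≤ a' i ∨ a' i + 1 ≤ a i)
    (hsepB : ∀ a ∈ B, ∀ a' ∈ B, a ≠ a' → ∃ i, a i + 1 ≤ a' i ∨ a' i + 1 ≤ a i) :
    (1 - lam) * (A.card : ℝ) ^ (1/(n:ℝ)) + lam * (B.card : ℝ) ^ (1/(n:ℝ)) ≤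
      (latG ((1 - lam) • K + lam • L + cube n (-1) 1) : ℝ) ^ (1/(n:ℝ)) := by
  obtain ⟨hl0, hl1⟩ := hlam
  have hml : 0 < 1 - lam := by linarith
  have hne : (0 : ℝ) < n := by exact_mod_cast hn
  set sA := cubeFam (1 - lam) A with hsA
  set sB := cubeFam lam B with hsB
  -- the target set and its lattice points
  set Vc := (1 - lam) • K + lam • L + cube n (-1) 1 with hVc
  have hVcb : Bornology.IsBounded Vc :=
    isBounded_add (isBounded_add (hKb.smul₀ _) (hLb.smul₀ _)) cube_bounded
  have hTfin : (Vc ∩ intPts n).Finite := finite_int_inter hVcb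
  set Tf := hTfin.toFinset with hTf
  have hlatG : latG Vc = Tf.card := Set.ncard_eq_toFinset_card _ hTfin
  -- Brunn-Minkowski for the two cube families
  have hBM := BM_boxes hn (sA.card + sB.card) sA sB le_rfl
    (cubeFam_nonempty hAne) (cubeFam_nonempty hBne) (cubeFam_good hml)
    (cubeFam_good hl0) (cubeFam_disj hml hsepA) (cubeFam_disj hl0 hsepB)
  rw [cubeFam_vol hml hsepA, cubeFam_vol hl0 hsepB] at hBM
  -- containment of the Minkowski sum in lattice cubes
  have hsub : famU sA + famU sB ⊆ ⋃ z ∈ Tf, bx z (z + 1) := by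
    rintro x ⟨xa, hxa, xb, hxb, rfl⟩
    obtain ⟨p, hp, hxa'⟩ := mem_iUnion₂.1 hxa
    obtain ⟨a, ha, rfl⟩ := Finset.mem_image.1 hp
    obtain ⟨q, hq, hxb'⟩ := mem_iUnion₂.1 hxb
    obtain ⟨b, hb, rfl⟩ := Finset.mem_image.1 hq
    set z : Fin n → ℝ := fun i => (⌊xa i + xb i⌋ : ℝ) with hz
    have hxbd : ∀ i, (1 - lam) * a i + lam * b i ≤ xa i + xb i ∧
        xa i + xb i < (1 - lam) * a i + lam * b i + 1 := by
      intro i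
      have h1 := hxa' i (mem_univ i)
      have h2 := hxb' i (mem_univ i)
      simp only at h1 h2
      constructor
      · linarith [h1.1, h2.1]
      · nlinarith [h1.2, h2.2]
    have hzmem : z ∈ Tf := by
      rw [hTf, Set.Finite.mem_toFinset]
      constructor
      · -- z ∈ Vc
        set w : Fin n → ℝ := fun i => (1 - lam) * a i + lam * b i with hw
        have hwV : w ∈ (1 - lam) • K + lam • L := by
          refine ⟨(1 - lam) • a, smul_mem_smul_set (hAK a ha), lam • b,
            smul_mem_smul_set (hBL b hb), ?_⟩
          funext i
          simp [hw, Pi.smul_apply, smul_eq_mul]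
        refine ⟨w, hwV, z - w, ?_, by funext i; show w i + (z i - w i) = z i; ring⟩
        intro i
        have hfl1 : z i ≤ xa i + xb i := Int.floor_le _
        have hfl2 : xa i + xb i - 1 < z i := Int.sub_one_lt_floor _
        have hb1 := (hxbd i).1
        have hb2 := (hxbd i).2
        constructor
        · show -1 < z i - w i
          simp only [hw]
          linarith
        · show z i - w i < 1
          simp only [hw]
          linarith
      · exact fun i => ⟨⌊xa i + xb i⌋, rfl⟩
    refine mem_biUnion hzmem ?_
    intro i _
    exact ⟨Int.floor_le _, by have := Int.lt_floor_add_one (xa i + xb i); simpa [hz] using this⟩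
  -- volume comparison
  have hvolsum : (volume (famU sA + famU sB)).toReal ≤ (Tf.card : ℝ) := by
    have h1 : volume (famU sA + famU sB) ≤ (Tf.card : ENNReal) := by
      calc volume (famU sA + famU sB) ≤ volume (⋃ z ∈ Tf, bx z (z + 1)) :=
            measure_mono hsub
        _ ≤ ∑ z ∈ Tf, volume (bx z (z + 1)) := measure_biUnion_finset_le _ _
        _ = ∑ z ∈ Tf, 1 := by
            refine Finset.sum_congr rfl fun z _ => ?_
            rw [volume_bx]
            have : ∀ i ∈ Finset.univ, ENNReal.ofReal ((z + 1) i - z i) = 1 := fun i _ => by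
              simp
            rw [Finset.prod_congr rfl this, Finset.prod_const_one]
        _ = (Tf.card : ENNReal) := by simp
    have := ENNReal.toReal_mono (by simp) h1
    simpa using this
  -- rpow algebra
  have hpow : ∀ (μ : ℝ) (m : ℕ), 0 < μ → ((m : ℝ) * μ ^ n) ^ (1/(n:ℝ)) =
      μ * (m : ℝ) ^ (1/(n:ℝ)) := by
    intro μ m hμ
    rw [Real.mul_rpow (by positivity) (by positivity), ← Real.rpow_natCast μ n,
      ← Real.rpow_mul hμ.le, mul_one_div, div_self hne.ne', Real.rpow_one, mul_comm]
  rw [hpow _ _ hml, hpow _ _ hl0] at hBM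
  calc (1 - lam) * (A.card : ℝ) ^ (1/(n:ℝ)) + lam * (B.card : ℝ) ^ (1/(n:ℝ))
      ≤ (volume (famU sA + famU sB)).toReal ^ (1/(n:ℝ)) := hBM
    _ ≤ (Tf.card : ℝ) ^ (1/(n:ℝ)) :=
        Real.rpow_le_rpow ENNReal.toReal_nonneg hvolsum (by positivity)
    _ = (latG Vc : ℝ) ^ (1/(n:ℝ)) := by rw [hlatG]

lemma exists_pointset {n : ℕ} {K : Set (Fin n → ℝ)} (hb : Bornology.IsBounded K)
    (hKne : K.Nonempty) :
    ∃ A : Finset (Fin n → ℝ), A.Nonempty ∧ (∀ a ∈ A, a ∈ K) ∧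
      (∀ a ∈ A, ∀ a' ∈ A, a ≠ a' → ∃ i, a i + 1 ≤ a' i ∨ a' i + 1 ≤ a i) ∧
      latG K ≤ A.card := by
  have hfin : (K ∩ intPts n).Finite := finite_int_inter hb
  by_cases hS : (K ∩ intPts n).Nonempty
  · obtain ⟨x, hx⟩ := hS
    refine ⟨hfin.toFinset, ⟨x, hfin.mem_toFinset.2 hx⟩, fun a ha => (hfin.mem_toFinset.1 ha).1,
      ?_, ?_⟩
    · intro a ha a' ha' hne
      have hai := (hfin.mem_toFinset.1 ha).2
      have hai' := (hfin.mem_toFinset.1 ha').2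
      have : ∃ i, a i ≠ a' i := by
        by_contra hc
        push_neg at hc
        exact hne (funext hc)
      obtain ⟨i, hi⟩ := this
      obtain ⟨m, hm⟩ := hai i
      obtain ⟨m', hm'⟩ := hai' i
      refine ⟨i, ?_⟩
      have hmm : m ≠ m' := by
        intro h
        rw [hm, hm', h] at hi
        exact hi rfl
      rcases lt_or_gt_of_ne hmm with h | h
      · left
        rw [hm, hm']
        have : m + 1 ≤ m' := h
        exact_mod_cast this
      · right
        rw [hm, hm']
        have : m' + 1 ≤ m := h
        exact_mod_cast this
    · rw [latG, Set.ncard_eq_toFinset_card _ hfin]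
  · obtain ⟨x, hx⟩ := hKne
    refine ⟨{x}, Finset.singleton_nonempty x, fun a ha => by
      rw [Finset.mem_singleton] at ha; exact ha ▸ hx, ?_, ?_⟩
    · intro a ha a' ha' hne
      rw [Finset.mem_singleton] at ha ha'
      exact absurd (ha.trans ha'.symm) hne
    · rw [latG, Set.not_nonempty_iff_eq_empty.1 hS, Set.ncard_empty]
      simp

theorem discrete_BrunnMinkowski' (n : ℕ) (hn : 1 ≤ n) (lam : ℝ)
    (hlam : lam ∈ Set.Ioo (0 : ℝ) 1)
    (K L : Set (Fin n → ℝ)) (hKne : K.Nonempty) (hLne : L.Nonempty)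
    (hKb : Bornology.IsBounded K) (hLb : Bornology.IsBounded L) :
    (1 - lam) * (latG K : ℝ) ^ (1 / (n : ℝ)) + lam * (latG L : ℝ) ^ (1 / (n : ℝ)) ≤
      (latG ((1 - lam) • K + lam • L + cube n (-1) 1) : ℝ) ^ (1 / (n : ℝ)) := by
  obtain ⟨A, hAne, hAK, hsepA, hAcard⟩ := exists_pointset hKb hKne
  obtain ⟨B, hBne, hBL, hsepB, hBcard⟩ := exists_pointset hLb hLne
  refine le_trans (add_le_add ?_ ?_)
    (main_aux hn hlam hKb hLb A B hAne hBne hAK hBL hsepA hsepB)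
  · refine mul_le_mul_of_nonneg_left ?_ (by linarith [hlam.2])
    exact Real.rpow_le_rpow (by positivity) (by exact_mod_cast hAcard) (by positivity)
  · refine mul_le_mul_of_nonneg_left ?_ (le_of_lt hlam.1)
    exact Real.rpow_le_rpow (by positivity) (by exact_mod_cast hBcard) (by positivity)


end BMaux

/-- Discrete Brunn–Minkowski inequality for the lattice point enumerator. -/
theorem discrete_BrunnMinkowski (n : ℕ) (hn : 1 ≤ n) (lam : ℝ)
    (hlam : lam ∈ Set.Ioo (0 : ℝ) 1)
    (K L : Set (Fin n → ℝ)) (hKne : K.Nonempty) (hLne : L.Nonempty)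
    (hKb : Bornology.IsBounded K) (hLb : Bornology.IsBounded L) :
    (1 - lam) * (latG K : ℝ) ^ (1 / (n : ℝ)) + lam * (latG L : ℝ) ^ (1 / (n : ℝ)) ≤
      (latG ((1 - lam) • K + lam • L + cube n (-1) 1) : ℝ) ^ (1 / (n : ℝ)) := by
  exact discrete_BrunnMinkowski' n hn lam hlam K L hKne hLne hKb hLb
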